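/- Let $X_1,\dots,X_n$ be independent identically distributed real-valued random variables with distribution function $F$ and order statistics $X_{1:n}\le\dots\le X_{n:n}$, let $k,\delta>0$ with $\rho=k/\delta$ an integer, $\rho>1$, $n\ge 2\rho+1$, and $\mathbf{E}|X_1|^{\delta}<\infty$. Then $\mathbf{E}|X_{\rho:n}|^k \le B(\rho,\,n-\rho+1)^{-1}\,(\mathbf{E}|X_1|^{\delta})^{\rho}$. -/

import Mathlib

open MeasureTheory ProbabilityTheory

/-- Expectation of a product of independent nonnegative (ℝ≥0∞-valued) random variables. -/
lemma aux_lintegral_prod_indep {Ω ι : Type*} [MeasurableSpace Ω] [DecidableEq ι]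
    (μ : Measure Ω) [IsProbabilityMeasure μ] (g : ι → Ω → ENNReal)
    (hindep : iIndepFun g μ) (hgmeas : ∀ i, Measurable (g i))
    (S : Finset ι) :
    ∫⁻ ω, ∏ i ∈ S, g i ω ∂μ = ∏ i ∈ S, ∫⁻ ω, g i ω ∂μ := by
  induction S using Finset.induction with
  | empty => simp
  | @insert i s hi ih =>
    have hIndep : IndepFun (g i) (∏ j ∈ s, g j) μ :=
      (hindep.indepFun_finsetProd_of_notMem hgmeas hi).symm
    have hprodmeas : Measurable (∏ j ∈ s, g j) := by
      have : (∏ j ∈ s, g j) = fun ω => ∏ j ∈ s, g j ω := by ext ω; simp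
      rw [this]
      exact Finset.measurable_prod s fun j _ => hgmeas j
    calc ∫⁻ ω, ∏ j ∈ insert i s, g j ω ∂μ
        = ∫⁻ ω, g i ω * (∏ j ∈ s, g j) ω ∂μ := by
          simp [Finset.prod_insert hi, Finset.prod_apply]
      _ = (∫⁻ ω, g i ω ∂μ) * ∫⁻ ω, (∏ j ∈ s, g j) ω ∂μ :=
          lintegral_mul_eq_lintegral_mul_lintegral_of_indepFun (hgmeas i) hprodmeas hIndep
      _ = ∏ j ∈ insert i s, ∫⁻ ω, g j ω ∂μ := by
          rw [Finset.prod_insert hi, ← ih]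
          congr 1
          simp [Finset.prod_apply]

/-- Bound for the `ρ`-th order statistic when `ρ = k/δ` is an integer greater than 1: for
i.i.d. real random variables `X 0, …, X (n-1)` with order statistics `Y`, `n ≥ 2ρ+1`, and
`E|X_1|^δ < ∞`: `E|X_{ρ:n}|^k ≤ B(ρ, n-ρ+1)⁻¹ (E|X_1|^δ)^ρ`, where
`B(a,b) = Γ(a)Γ(b)/Γ(a+b)`. -/
theorem stmt_9 {Ω : Type*} [MeasurableSpace Ω] (μ : Measure Ω) [IsProbabilityMeasure μ]
    (r : ℕ) (hr : 1 < r) (n : ℕ) (hn : 2 * r + 1 ≤ n) (X Y : Fin n → Ω → ℝ)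
    (hmeas : ∀ j, Measurable (X j))
    (hindep : iIndepFun X μ)
    (hident : ∀ j, μ.map (X j) = μ.map (X ⟨0, by omega⟩))
    (hsort : ∀ ω, Monotone fun j => Y j ω)
    (hperm : ∀ ω, ∃ σ : Equiv.Perm (Fin n), ∀ j, Y j ω = X (σ j) ω)
    (k δ : ℝ) (hk : 0 < k) (hδ : 0 < δ) (hρ : k / δ = (r : ℝ))
    (hmom : Integrable (fun ω => |X ⟨0, by omega⟩ ω| ^ δ) μ)
    (B : ℝ → ℝ → ℝ)
    (hB : ∀ a b, B a b = Real.Gamma a * Real.Gamma b / Real.Gamma (a + b)) :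
    ∫⁻ ω, ENNReal.ofReal (|Y ⟨r - 1, by omega⟩ ω| ^ k) ∂μ ≤
      ENNReal.ofReal ((B (k / δ) ((n : ℝ) - k / δ + 1))⁻¹ *
        (∫ ω, |X ⟨0, by omega⟩ ω| ^ δ ∂μ) ^ (k / δ)) := by
  classical
  have hrn : r ≤ n := by omega
  set ρ : Fin n := ⟨r - 1, by omega⟩
  -- k = δ * r
  have hkd : k = δ * r := by
    have := (div_eq_iff hδ.ne').mp hρ
    linarith
  -- pointwise: there are r indices with |X i ω| ≥ |Y ρ ω|
  have key : ∀ ω, ∃ S : Finset (Fin n), S.card = r ∧ ∀ i ∈ S, |Y ρ ω| ≤ |X i ω| := by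
    intro ω
    obtain ⟨σ, hσ⟩ := hperm ω
    by_cases hy : 0 ≤ Y ρ ω
    · refine ⟨Finset.image (fun i : Fin r => σ ⟨r - 1 + i.val, by
        have := i.isLt; omega⟩) Finset.univ, ?_, ?_⟩
      · rw [Finset.card_image_of_injective _ ?_, Finset.card_univ, Fintype.card_fin]
        intro a b hab
        have := σ.injective hab
        have := Fin.mk.injEq (r - 1 + a.val) _ (r - 1 + b.val) _ ▸ this
        exact Fin.ext (by omega)
      · intro i hi
        obtain ⟨j, _, rfl⟩ := Finset.mem_image.mp hi
        rw [← hσ]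
        have hle : Y ρ ω ≤ Y ⟨r - 1 + j.val, by have := j.isLt; omega⟩ ω :=
          hsort ω (by simp [ρ, Fin.mk_le_mk])
        rw [abs_of_nonneg hy]
        exact hle.trans (le_abs_self _)
    · refine ⟨Finset.image (fun i : Fin r => σ ⟨i.val, by have := i.isLt; omega⟩)
        Finset.univ, ?_, ?_⟩
      · rw [Finset.card_image_of_injective _ ?_, Finset.card_univ, Fintype.card_fin]
        intro a b hab
        have := σ.injective hab
        have := Fin.mk.injEq a.val _ b.val _ ▸ this
        exact Fin.ext (by omega)
      · intro i hi
        obtain ⟨j, _, rfl⟩ := Finset.mem_image.mp hi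
        rw [← hσ]
        have hle : Y ⟨j.val, by have := j.isLt; omega⟩ ω ≤ Y ρ ω :=
          hsort ω (by simp [ρ, Fin.mk_le_mk]; omega)
        rw [abs_of_nonpos (le_of_not_ge hy)]
        calc -Y ρ ω ≤ -Y ⟨j.val, by have := j.isLt; omega⟩ ω := by linarith
          _ ≤ |Y ⟨j.val, by have := j.isLt; omega⟩ ω| := neg_le_abs _
  set 𝒮 : Finset (Finset (Fin n)) := Finset.powersetCard r Finset.univ with h𝒮
  -- pointwise real bound
  have hpt : ∀ ω, |Y ρ ω| ^ k ≤ ∑ S ∈ 𝒮, ∏ i ∈ S, |X i ω| ^ δ := by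
    intro ω
    obtain ⟨S, hcard, hle⟩ := key ω
    have hS : S ∈ 𝒮 := Finset.mem_powersetCard.mpr ⟨Finset.subset_univ _, hcard⟩
    have h1 : |Y ρ ω| ^ k = (|Y ρ ω| ^ δ) ^ (r : ℕ) := by
      rw [← Real.rpow_natCast (|Y ρ ω| ^ δ) r, ← Real.rpow_mul (abs_nonneg _), ← hkd]
    have h2 : (|Y ρ ω| ^ δ) ^ (r : ℕ) ≤ ∏ i ∈ S, |X i ω| ^ δ := by
      rw [← hcard, ← Finset.prod_const]
      exact Finset.prod_le_prod (fun i _ => Real.rpow_nonneg (abs_nonneg _) δ)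
        (fun i hi => Real.rpow_le_rpow (abs_nonneg _) (hle i hi) hδ.le)
    refine (h1 ▸ h2).trans ?_
    exact Finset.single_le_sum (f := fun T => ∏ i ∈ T, |X i ω| ^ δ)
      (fun T _ => Finset.prod_nonneg fun i _ => Real.rpow_nonneg (abs_nonneg _) δ) hS
  -- the ENNReal-valued variables
  set g : Fin n → Ω → ENNReal := fun i ω => ENNReal.ofReal (|X i ω| ^ δ) with hg
  have hφmeas : Measurable fun x : ℝ => ENNReal.ofReal (|x| ^ δ) :=
    ((Real.continuous_rpow_const hδ.le).measurable.comp measurable_abs).ennreal_ofReal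
  have hgmeas : ∀ i, Measurable (g i) := fun i => hφmeas.comp (hmeas i)
  have hgindep : iIndepFun g μ :=
    hindep.comp (fun _ x => ENNReal.ofReal (|x| ^ δ)) (fun _ => hφmeas)
  set m : ℝ := ∫ ω, |X ⟨0, by omega⟩ ω| ^ δ ∂μ with hm
  have hm0 : 0 ≤ m := integral_nonneg fun ω => Real.rpow_nonneg (abs_nonneg _) δ
  have hgint : ∀ i, ∫⁻ ω, g i ω ∂μ = ENNReal.ofReal m := by
    intro i
    have h1 : ∫⁻ ω, g i ω ∂μ = ∫⁻ x, ENNReal.ofReal (|x| ^ δ) ∂(μ.map (X i)) :=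
      (lintegral_map hφmeas (hmeas i)).symm
    rw [h1, hident i, lintegral_map hφmeas (hmeas _),
      ← ofReal_integral_eq_lintegral_ofReal hmom
        (Filter.Eventually.of_forall fun ω => Real.rpow_nonneg (abs_nonneg _) δ)]
  -- main chain of (in)equalities
  have hchain : ∫⁻ ω, ENNReal.ofReal (|Y ρ ω| ^ k) ∂μ ≤
      (n.choose r : ENNReal) * ENNReal.ofReal (m ^ r) := by
    calc ∫⁻ ω, ENNReal.ofReal (|Y ρ ω| ^ k) ∂μ
        ≤ ∫⁻ ω, ∑ S ∈ 𝒮, ∏ i ∈ S, g i ω ∂μ := by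
          refine lintegral_mono fun ω => ?_
          calc ENNReal.ofReal (|Y ρ ω| ^ k)
              ≤ ENNReal.ofReal (∑ S ∈ 𝒮, ∏ i ∈ S, |X i ω| ^ δ) :=
                ENNReal.ofReal_le_ofReal (hpt ω)
            _ = ∑ S ∈ 𝒮, ∏ i ∈ S, g i ω := by
                rw [ENNReal.ofReal_sum_of_nonneg (fun T _ =>
                  Finset.prod_nonneg fun i _ => Real.rpow_nonneg (abs_nonneg _) δ)]
                exact Finset.sum_congr rfl fun T _ =>
                  ENNReal.ofReal_prod_of_nonneg fun i _ => Real.rpow_nonneg (abs_nonneg _) δ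
      _ = ∑ S ∈ 𝒮, ∫⁻ ω, ∏ i ∈ S, g i ω ∂μ :=
          lintegral_finset_sum 𝒮 fun S _ => Finset.measurable_prod S fun i _ => hgmeas i
      _ = ∑ S ∈ 𝒮, ∏ i ∈ S, ∫⁻ ω, g i ω ∂μ :=
          Finset.sum_congr rfl fun S _ => aux_lintegral_prod_indep μ g hgindep hgmeas S
      _ = ∑ S ∈ 𝒮, ENNReal.ofReal (m ^ r) := by
          refine Finset.sum_congr rfl fun S hS => ?_
          have hcard : S.card = r := (Finset.mem_powersetCard.mp hS).2
          simp only [hgint]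
          rw [Finset.prod_const, hcard, ← ENNReal.ofReal_pow hm0]
      _ = (𝒮.card : ENNReal) * ENNReal.ofReal (m ^ r) := by
          rw [Finset.sum_const, nsmul_eq_mul]
      _ = (n.choose r : ENNReal) * ENNReal.ofReal (m ^ r) := by
          rw [h𝒮, Finset.card_powersetCard, Finset.card_univ, Fintype.card_fin]
  refine hchain.trans ?_
  -- compute the Beta factor
  have hBval : B (k / δ) ((n : ℝ) - k / δ + 1) =
      ((r - 1).factorial * (n - r).factorial : ℝ) / (n.factorial : ℝ) := by
    rw [hρ, hB]
    have h1 : (r : ℝ) = ((r - 1 : ℕ) : ℝ) + 1 := by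
      rw [Nat.cast_sub (by omega)]; ring
    have h2 : (n : ℝ) - (r : ℝ) + 1 = ((n - r : ℕ) : ℝ) + 1 := by
      rw [Nat.cast_sub hrn]
    have h3 : (r : ℝ) + ((n : ℝ) - (r : ℝ) + 1) = (n : ℕ) + 1 := by ring
    rw [h3, Real.Gamma_nat_eq_factorial]
    nth_rewrite 1 [h1]
    rw [h2, Real.Gamma_nat_eq_factorial, Real.Gamma_nat_eq_factorial]
  have hfac : r * n.choose r * ((r - 1).factorial * (n - r).factorial) = n.factorial := by
    have h := Nat.choose_mul_factorial_mul_factorial hrn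
    have hr1 : r.factorial = r * (r - 1).factorial := by
      conv_lhs => rw [show r = (r - 1) + 1 from by omega]
      rw [Nat.factorial_succ]
      congr 1
      omega
    calc r * n.choose r * ((r - 1).factorial * (n - r).factorial)
        = n.choose r * (r * (r - 1).factorial) * (n - r).factorial := by ring
      _ = n.choose r * r.factorial * (n - r).factorial := by rw [← hr1]
      _ = n.factorial := h
  have hBinv : (B (k / δ) ((n : ℝ) - k / δ + 1))⁻¹ = ((r * n.choose r : ℕ) : ℝ) := by
    rw [hBval]
    have hne1 : ((r - 1).factorial : ℝ) ≠ 0 := Nat.cast_ne_zero.mpr (Nat.factorial_ne_zero _)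
    have hne2 : ((n - r).factorial : ℝ) ≠ 0 := Nat.cast_ne_zero.mpr (Nat.factorial_ne_zero _)
    have hne3 : (n.factorial : ℝ) ≠ 0 := Nat.cast_ne_zero.mpr (Nat.factorial_ne_zero _)
    rw [inv_div]
    rw [div_eq_iff (by positivity)]
    push_cast [← hfac]
    ring
  -- finish: compare coefficients
  have hexp : m ^ (k / δ) = m ^ r := by
    rw [hρ, Real.rpow_natCast]
  rw [hBinv, hexp, ← ENNReal.ofReal_natCast, ← ENNReal.ofReal_mul (by positivity)]
  refine (ENNReal.ofReal_le_ofReal ?_)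
  have hcle : (n.choose r : ℝ) ≤ ((r * n.choose r : ℕ) : ℝ) := by
    have : n.choose r ≤ r * n.choose r := Nat.le_mul_of_pos_left _ (by omega)
    exact_mod_cast this
  exact mul_le_mul_of_nonneg_right hcle (by positivity)
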